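/- Suppose that for every issue k, c1 disagrees with the voter v on issue k and some other candidate agrees with v on issue k. Then for every nonempty subset S of issues, there exists a candidate c_j (j ≠ 1) whose Hamming distance to v restricted to S is strictly less than that of c1; hence c1 cannot win the single-voter election even with best-case tie-breaking. (Caveat: this requires that some candidate agreeing with v on an issue of S exists, which follows from the hypothesis applied to any k ∈ S.) -/
import Mathlib


/-- Hamming distance restricted to a set of issues. -/
def hamOn {ℓ : ℕ} (S : Finset (Fin ℓ)) (x y : Fin ℓ → Bool) : ℕ :=
  (S.filter (fun k => x k ≠ y k)).card

/-- if on every issue c1 disagrees with v while some other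
candidate agrees with v, then on every nonempty issue set some other
candidate is strictly closer to v than c1 (completeness of Single Issue Win). -/
theorem single_issue_win_complete
    (ℓ m : ℕ) (c1 : Fin ℓ → Bool) (c : Fin m → Fin ℓ → Bool) (v : Fin ℓ → Bool)
    (h : ∀ k : Fin ℓ, c1 k ≠ v k ∧ ∃ j : Fin m, c j k = v k) :
    ∀ S : Finset (Fin ℓ), S.Nonempty →
      ∃ j : Fin m, hamOn S v (c j) < hamOn S v c1 := by
  intro S hS
  obtain ⟨k, hk⟩ := hS
  obtain ⟨j, hj⟩ := (h k).2
  refine ⟨j, ?_⟩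
  have h1 : hamOn S v c1 = S.card := by
    unfold hamOn
    congr 1
    apply Finset.filter_true_of_mem
    intro x _
    exact fun hx => (h x).1 hx.symm
  rw [h1]
  have : hamOn S v (c j) < S.card := by
    unfold hamOn
    apply Finset.card_lt_card
    constructor
    · exact Finset.filter_subset _ _
    · intro hsub
      have := hsub hk
      simp only [Finset.mem_filter] at this
      exact this.2 hj.symm
  exact this
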